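/- Dawson–Sankoff bound: for events A_1,...,A_N with θ₁ := ∑_i P(A_i) > 0 and θ₂ := ∑_{i<j} P(A_i ∩ A_j), letting κ := 2θ₂/θ₁ − ⌊2θ₂/θ₁⌋, one has P(⋃_{i=1}^N A_i) ≥ κθ₁²/((2−κ)θ₁ + 2θ₂) + (1−κ)θ₁²/((1−κ)θ₁ + 2θ₂). -/

import Mathlib

open MeasureTheory Finset

open scoped Classical in
lemma ds_meas_sum {Ω : Type*} [Fintype Ω] [MeasurableSpace Ω] [DiscreteMeasurableSpace Ω]
    (P : Measure Ω) [IsProbabilityMeasure P] (s : Set Ω) :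
    (P s).toReal = ∑ ω : Ω, if ω ∈ s then (P {ω}).toReal else 0 := by
  have h : s = ⋃ ω ∈ Finset.univ.filter (· ∈ s), ({ω} : Set Ω) := by
    ext x; simp
  rw [show (P s) = P (⋃ ω ∈ Finset.univ.filter (· ∈ s), ({ω} : Set Ω)) from by rw [← h]]
  rw [measure_biUnion_finset ?_ (fun _ _ => .of_discrete)]
  · rw [ENNReal.toReal_sum (fun _ _ => measure_ne_top P _), Finset.sum_filter]
  · intro a _ b _ hab
    simp [Set.disjoint_singleton_left, hab]

lemma ds_pairs {α : Type*} [DecidableEq α] [LinearOrder α] (s : Finset α) :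
    2 * ((s ×ˢ s).filter (fun p => p.1 < p.2)).card + s.card = s.card ^ 2 := by
  have hswap : ((s ×ˢ s).filter (fun p => p.1 < p.2)).card
      = ((s ×ˢ s).filter (fun p => p.2 < p.1)).card := by
    apply Finset.card_nbij' Prod.swap Prod.swap <;>
      simp +contextual [Finset.mem_filter, Finset.mem_product, and_comm, and_assoc, Set.MapsTo, Set.LeftInvOn, Set.RightInvOn]
  have hun : s.offDiag = ((s ×ˢ s).filter (fun p => p.1 < p.2)) ∪
      ((s ×ˢ s).filter (fun p => p.2 < p.1)) := by
    ext p
    simp only [Finset.mem_offDiag, Finset.mem_union, Finset.mem_filter, Finset.mem_product]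
    constructor
    · rintro ⟨h1, h2, h3⟩
      rcases lt_or_gt_of_ne h3 with h | h
      · exact Or.inl ⟨⟨h1, h2⟩, h⟩
      · exact Or.inr ⟨⟨h1, h2⟩, h⟩
    · rintro (⟨⟨h1, h2⟩, h⟩ | ⟨⟨h1, h2⟩, h⟩)
      · exact ⟨h1, h2, ne_of_lt h⟩
      · exact ⟨h1, h2, ne_of_gt h⟩
  have hdisj : Disjoint ((s ×ˢ s).filter (fun p => p.1 < p.2))
      ((s ×ˢ s).filter (fun p => p.2 < p.1)) := by
    rw [Finset.disjoint_left]
    intro p hp hq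
    simp only [Finset.mem_filter] at hp hq
    exact absurd hq.2 (not_lt.mpr (le_of_lt hp.2))
  have hcard := Finset.offDiag_card s
  rw [hun, Finset.card_union_of_disjoint hdisj, ← hswap] at hcard
  have hle : s.card ≤ s.card * s.card := by nlinarith
  rw [pow_two]
  omega

open scoped Classical in
lemma ds_sum_ite {α : Type*} (F : Finset α) (Q : α → Prop) (c : ℝ) :
    (∑ x ∈ F, if Q x then c else 0) = ((F.filter Q).card : ℝ) * c := by
  rw [← Finset.sum_filter, Finset.sum_const, nsmul_eq_mul]

set_option maxHeartbeats 1000000 in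
theorem dawson_sankoff_bound {Ω : Type*} [Fintype Ω] [MeasurableSpace Ω]
    [DiscreteMeasurableSpace Ω] (P : Measure Ω) [IsProbabilityMeasure P] (N : ℕ)
    (A : Fin N → Set Ω)
    (θ₁ θ₂ κ : ℝ)
    (hθ₁ : θ₁ = ∑ i : Fin N, (P (A i)).toReal)
    (hθ₂ : θ₂ = ∑ p ∈ Finset.univ.filter (fun p : Fin N × Fin N => p.1 < p.2),
        (P (A p.1 ∩ A p.2)).toReal)
    (hpos : 0 < θ₁)
    (hκ : κ = 2 * θ₂ / θ₁ - ⌊2 * θ₂ / θ₁⌋) :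
    (P (⋃ i, A i)).toReal ≥
      κ * θ₁ ^ 2 / ((2 - κ) * θ₁ + 2 * θ₂) +
        (1 - κ) * θ₁ ^ 2 / ((1 - κ) * θ₁ + 2 * θ₂) := by
  classical
  set w : Ω → ℝ := fun ω => (P {ω}).toReal with hw
  have hw0 : ∀ ω, 0 ≤ w ω := fun ω => ENNReal.toReal_nonneg
  set f : Ω → ℕ := fun ω => (Finset.univ.filter (fun i => ω ∈ A i)).card with hf
  have hmeas : ∀ s : Set Ω, (P s).toReal = ∑ ω : Ω, if ω ∈ s then w ω else 0 := by
    intro s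
    rw [ds_meas_sum P s]
  have h1 : θ₁ = ∑ ω : Ω, (f ω : ℝ) * w ω := by
    rw [hθ₁]
    simp_rw [hmeas]
    rw [Finset.sum_comm]
    refine Finset.sum_congr rfl fun ω _ => ?_
    rw [← Finset.sum_filter, Finset.sum_const, nsmul_eq_mul]
  set T : Ω → ℕ := fun ω =>
    (((Finset.univ.filter (fun i : Fin N => ω ∈ A i)) ×ˢ
      (Finset.univ.filter (fun i : Fin N => ω ∈ A i))).filter (fun p => p.1 < p.2)).card with hT
  have h2 : θ₂ = ∑ ω : Ω, (T ω : ℝ) * w ω := by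
    rw [hθ₂]
    simp_rw [hmeas]
    rw [Finset.sum_comm]
    refine Finset.sum_congr rfl fun ω _ => ?_
    refine (ds_sum_ite _ (fun p : Fin N × Fin N => ω ∈ A p.1 ∩ A p.2) (w ω)).trans ?_
    simp only [hT]
    congr 3
    · ext p
      simp only [Finset.mem_filter, Finset.mem_product, Finset.mem_univ, true_and,
        Set.mem_inter_iff]
      tauto

  have h2' : ∀ ω, ((f ω : ℝ)) ^ 2 = 2 * T ω + f ω := by
    intro ω
    have := ds_pairs (Finset.univ.filter (fun i : Fin N => ω ∈ A i))
    have : ((2 * T ω + f ω : ℕ) : ℝ) = ((f ω : ℕ) : ℝ) ^ 2 := by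
      rw [this]; push_cast; ring
    push_cast at this
    linarith
  have h3 : (P (⋃ i, A i)).toReal = ∑ ω : Ω, if 0 < f ω then w ω else 0 := by
    rw [hmeas]
    refine Finset.sum_congr rfl fun ω _ => ?_
    congr 1
    simp [hf, Finset.card_pos, Finset.filter_nonempty_iff, Set.mem_iUnion]
  -- nonnegativity facts
  have hθ₂0 : 0 ≤ θ₂ := by
    rw [hθ₂]; exact Finset.sum_nonneg fun _ _ => ENNReal.toReal_nonneg
  set m : ℤ := ⌊2 * θ₂ / θ₁⌋ with hm
  have hm0 : (0:ℝ) ≤ (m : ℝ) := by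
    have : (0:ℤ) ≤ m := Int.floor_nonneg.mpr (by positivity)
    exact_mod_cast this
  set a : ℕ := m.toNat + 1 with ha
  have haR : (a : ℝ) = (m : ℝ) + 1 := by
    have : ((m.toNat : ℤ) : ℝ) = (m : ℝ) := by
      rw [Int.toNat_of_nonneg (by exact_mod_cast hm0)]
    push_cast [ha] at this ⊢
    linarith
  -- κ is the fractional part
  have hκ0 : 0 ≤ κ := by
    rw [hκ]
    have := Int.floor_le (2 * θ₂ / θ₁)
    linarith
  have hκ1 : κ < 1 := by
    rw [hκ]
    have := Int.sub_one_lt_floor (2 * θ₂ / θ₁)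
    linarith
  have h2θ₂ : 2 * θ₂ = ((m : ℝ) + κ) * θ₁ := by
    rw [hκ, hm]
    field_simp
    ring
  -- pointwise inequality
  have hpoint : ∀ ω : Ω, (2 * (a:ℝ) + 1) * (f ω : ℝ) * w ω ≤
      (f ω : ℝ) ^ 2 * w ω + (a : ℝ) * ((a:ℝ) + 1) * (if 0 < f ω then w ω else 0) := by
    intro ω
    rcases Nat.eq_zero_or_pos (f ω) with h | h
    · simp [h]
    · rw [if_pos h]
      have key : (2 * (a:ℝ) + 1) * (f ω : ℝ) ≤ (f ω : ℝ) ^ 2 + (a:ℝ) * ((a:ℝ) + 1) := by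
        rcases le_or_gt (f ω) a with hle | hlt
        · have h1' : (f ω : ℝ) ≤ (a:ℝ) := by exact_mod_cast hle
          have h2'' : (1 : ℝ) ≤ (f ω : ℝ) := by exact_mod_cast h
          nlinarith
        · have h1' : (a:ℝ) + 1 ≤ (f ω : ℝ) := by exact_mod_cast hlt
          nlinarith
      nlinarith [hw0 ω, mul_le_mul_of_nonneg_right key (hw0 ω)]
  -- summed inequality
  have hsq : ∑ ω : Ω, (f ω : ℝ) ^ 2 * w ω = θ₁ + 2 * θ₂ := by
    rw [h1, h2]
    rw [Finset.mul_sum, ← Finset.sum_add_distrib]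
    refine Finset.sum_congr rfl fun ω _ => ?_
    rw [h2' ω]
    ring
  have hsum : (2 * (a:ℝ) + 1) * θ₁ ≤ (θ₁ + 2 * θ₂) +
      (a : ℝ) * ((a:ℝ) + 1) * (P (⋃ i, A i)).toReal := by
    have := Finset.sum_le_sum (fun ω (_ : ω ∈ Finset.univ) => hpoint ω)
    rw [Finset.sum_add_distrib] at this
    calc (2 * (a:ℝ) + 1) * θ₁ = ∑ ω : Ω, (2 * (a:ℝ) + 1) * (f ω : ℝ) * w ω := by
          rw [h1, Finset.mul_sum]; exact Finset.sum_congr rfl fun ω _ => by ring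
      _ ≤ _ := this.trans_eq (by
          rw [hsq, h3, Finset.mul_sum])
  set U : ℝ := (P (⋃ i, A i)).toReal with hU
  have hsum' : ((m:ℝ) + 2 - κ) * θ₁ ≤ ((m:ℝ) + 1) * ((m:ℝ) + 2) * U := by
    rw [haR] at hsum
    nlinarith [hsum, h2θ₂]
  have hd1 : (2 - κ) * θ₁ + 2 * θ₂ = ((m:ℝ) + 2) * θ₁ := by rw [h2θ₂]; ring
  have hd2 : (1 - κ) * θ₁ + 2 * θ₂ = ((m:ℝ) + 1) * θ₁ := by rw [h2θ₂]; ring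
  rw [ge_iff_le, hd1, hd2]
  have hp1 : (0:ℝ) < ((m:ℝ) + 1) * θ₁ := by nlinarith
  have hp2 : (0:ℝ) < ((m:ℝ) + 2) * θ₁ := by nlinarith
  rw [div_add_div _ _ (ne_of_gt hp2) (ne_of_gt hp1), div_le_iff₀ (by positivity)]
  nlinarith [mul_le_mul_of_nonneg_right hsum' (sq_nonneg θ₁), sq_nonneg θ₁, hpos]
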